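/- Let q, a, b, c ∈ ℂ with |q| < 1, a ≠ 0, b ≠ 0, |c/(a b)| < 1, and suppose c q^j ≠ 1 and a q^j ≠ 1 for all integers j ≥ 0. Then for every integer k ≥ 0 the companion identity of the q-Gauss sum holds: ∑_{j=0}^k (a;q)_j (b;q)_j (c/(a b))^j / ((q;q)_j (c;q)_j) = ((c/b;q)_∞ / (c;q)_∞) · ∑_{j=0}^k (b;q)_j (c/(a b))^j / (q;q)_j + ((a;q)_{k+1} (b;q)_{k+1} c^{k+1} / ((q;q)_k (c;q)_{k+1} a^k b^{k+1})) · ∑_{n=0}^∞ (a q^{k+1};q)_n (c/b;q)_n q^n / ((a;q)_{n+1} (c q^{k+1};q)_n), where the infinite series on the right converges absolutely. -/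

import Mathlib

open Filter Topology

/-- The finite q-shifted factorial `(a;q)_n = ∏_{j=0}^{n-1} (1 - a q^j)`. -/
noncomputable def qPoch (q a : ℂ) (n : ℕ) : ℂ := ∏ j ∈ Finset.range n, (1 - a * q ^ j)

/-- The infinite q-shifted factorial `(a;q)_∞ = ∏_{j=0}^{∞} (1 - a q^j)`. -/
noncomputable def qPochInf (q a : ℂ) : ℂ := ∏' j : ℕ, (1 - a * q ^ j)

lemma qPoch_zero (q x : ℂ) : qPoch q x 0 = 1 := Finset.prod_range_zero _

lemma qPoch_succ (q x : ℂ) (n : ℕ) : qPoch q x (n+1) = qPoch q x n * (1 - x * q ^ n) :=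
  Finset.prod_range_succ _ _

lemma qPoch_one (q x : ℂ) : qPoch q x 1 = 1 - x := by simp [qPoch]

lemma qPoch_add (q x : ℂ) (m n : ℕ) :
    qPoch q x (m + n) = qPoch q x m * qPoch q (x * q ^ m) n := by
  rw [qPoch, Finset.prod_range_add]
  congr 1
  refine Finset.prod_congr rfl fun i _ => ?_
  rw [pow_add]; ring

lemma qPoch_shift_succ (q x : ℂ) (m j : ℕ) :
    qPoch q (x * q ^ m) (j + 1) = (1 - x * q ^ m) * qPoch q (x * q ^ (m+1)) j := by
  rw [qPoch, Finset.prod_range_succ', pow_zero, mul_one, mul_comm]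
  congr 1
  refine Finset.prod_congr rfl fun i _ => ?_
  rw [pow_succ]; ring

lemma one_sub_ne {q x : ℂ} (hx : ∀ j : ℕ, x * q ^ j ≠ 1) (m i : ℕ) :
    1 - x * q ^ m * q ^ i ≠ 0 := by
  rw [mul_assoc, ← pow_add, sub_ne_zero]
  exact fun h => hx (m + i) h.symm

lemma qPoch_ne_zero {q x : ℂ} (hx : ∀ j : ℕ, x * q ^ j ≠ 1) (n : ℕ) :
    qPoch q x n ≠ 0 := by
  refine Finset.prod_ne_zero_iff.2 fun i _ => ?_
  rw [sub_ne_zero]; exact fun h => hx i h.symm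

lemma q_self_ne {q : ℂ} (hq : ‖q‖ < 1) : ∀ j : ℕ, q * q ^ j ≠ 1 := by
  intro j h
  have : ‖q * q ^ j‖ < 1 := by
    rw [norm_mul, norm_pow]
    calc ‖q‖ * ‖q‖ ^ j ≤ ‖q‖ * 1 := by
          refine mul_le_mul_of_nonneg_left (pow_le_one₀ (norm_nonneg q) hq.le) (norm_nonneg q)
      _ = ‖q‖ := mul_one _
      _ < 1 := hq
  rw [h] at this; simp at this

lemma qPoch_norm_le {q : ℂ} (x : ℂ) (hq : ‖q‖ < 1) (n : ℕ) :
    ‖qPoch q x n‖ ≤ Real.exp (‖x‖ * (1 - ‖q‖)⁻¹) := by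
  have h0 : (0:ℝ) ≤ ‖q‖ := norm_nonneg q
  calc ‖qPoch q x n‖ = ∏ j ∈ Finset.range n, ‖1 - x * q ^ j‖ := norm_prod _ _
    _ ≤ ∏ j ∈ Finset.range n, Real.exp (‖x‖ * ‖q‖ ^ j) := by
        refine Finset.prod_le_prod (fun j _ => norm_nonneg _) fun j _ => ?_
        calc ‖1 - x * q ^ j‖ ≤ ‖(1:ℂ)‖ + ‖x * q ^ j‖ := norm_sub_le _ _
          _ = ‖x‖ * ‖q‖ ^ j + 1 := by rw [norm_one, norm_mul, norm_pow]; ring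
          _ ≤ Real.exp (‖x‖ * ‖q‖ ^ j) := Real.add_one_le_exp _
    _ = Real.exp (∑ j ∈ Finset.range n, ‖x‖ * ‖q‖ ^ j) := by rw [Real.exp_sum]
    _ ≤ Real.exp (‖x‖ * (1 - ‖q‖)⁻¹) := by
        apply Real.exp_le_exp.2
        rw [← Finset.mul_sum]
        refine mul_le_mul_of_nonneg_left ?_ (norm_nonneg x)
        calc ∑ j ∈ Finset.range n, ‖q‖ ^ j ≤ ∑' j : ℕ, ‖q‖ ^ j :=
              (summable_geometric_of_lt_one h0 hq).sum_le_tsum _ (fun j _ => pow_nonneg h0 j)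
          _ = (1 - ‖q‖)⁻¹ := tsum_geometric_of_lt_one h0 hq

lemma summable_log_qPoch {q : ℂ} (x : ℂ) (hq : ‖q‖ < 1) :
    Summable (fun n : ℕ => Complex.log (1 - x * q ^ n)) := by
  have hgeo : Summable (fun n : ℕ => (3/2 : ℝ) * (‖x‖ * ‖q‖ ^ n)) :=
    ((summable_geometric_of_lt_one (norm_nonneg q) hq).mul_left ‖x‖).mul_left _
  refine Summable.of_norm_bounded_eventually_nat hgeo ?_
  have hq0 : Tendsto (fun n : ℕ => ‖x‖ * ‖q‖ ^ n) atTop (𝓝 0) := by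
    simpa using (tendsto_pow_atTop_nhds_zero_of_norm_lt_one
      (by rwa [norm_norm] : ‖‖q‖‖ < 1)).const_mul ‖x‖
  filter_upwards [hq0.eventually_le_const (by norm_num : (0:ℝ) < 1/2)] with n hn
  have h1 : ‖-(x * q ^ n)‖ ≤ 1/2 := by
    rw [norm_neg, norm_mul, norm_pow]; exact hn
  calc ‖Complex.log (1 - x * q ^ n)‖ = ‖Complex.log (1 + -(x * q ^ n))‖ := by
        rw [sub_eq_add_neg]
    _ ≤ 3/2 * ‖-(x * q ^ n)‖ := Complex.norm_log_one_add_half_le_self h1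
    _ = 3/2 * (‖x‖ * ‖q‖ ^ n) := by rw [norm_neg, norm_mul, norm_pow]

lemma hasProd_qPochInf {q x : ℂ} (hq : ‖q‖ < 1) :
    HasProd (fun n : ℕ => 1 - x * q ^ n) (qPochInf q x) := by
  by_cases hx : ∀ j : ℕ, 1 - x * q ^ j ≠ 0
  · exact (Complex.multipliable_of_summable_log (summable_log_qPoch x hq)).hasProd
  · push_neg at hx
    obtain ⟨j0, hj0⟩ := hx
    have h0 : HasProd (fun n : ℕ => 1 - x * q ^ n) 0 := by
      rw [HasProd]
      refine Tendsto.congr' ?_ tendsto_const_nhds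
      rw [Filter.EventuallyEq]; refine eventually_atTop.2 ?_
      exact ⟨{j0}, fun s hs => (Finset.prod_eq_zero (hs (Finset.mem_singleton_self j0)) hj0).symm⟩
    rwa [qPochInf, h0.tprod_eq]

lemma tendsto_qPoch {q : ℂ} (x : ℂ) (hq : ‖q‖ < 1) :
    Tendsto (fun n : ℕ => qPoch q x n) atTop (𝓝 (qPochInf q x)) :=
  (hasProd_qPochInf hq).tendsto_prod_nat

lemma qPochInf_ne_zero {q x : ℂ} (hq : ‖q‖ < 1) (hx : ∀ j : ℕ, x * q ^ j ≠ 1) :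
    qPochInf q x ≠ 0 := by
  have hx' : ∀ j : ℕ, 1 - x * q ^ j ≠ 0 := by
    intro j; rw [sub_ne_zero]; exact fun h => hx j h.symm
  have h2 := Complex.cexp_tsum_eq_tprod (f := fun n : ℕ => 1 - x * q ^ n)
    hx' (summable_log_qPoch x hq)
  rw [qPochInf, ← h2]
  exact Complex.exp_ne_zero _

lemma qPoch_norm_lower {q x : ℂ} (hq : ‖q‖ < 1) (hx : ∀ j : ℕ, x * q ^ j ≠ 1) :
    ∃ δ : ℝ, 0 < δ ∧ ∀ n : ℕ, δ ≤ ‖qPoch q x n‖ := by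
  have hL : (0:ℝ) < ‖qPochInf q x‖ := norm_pos_iff.2 (qPochInf_ne_zero hq hx)
  have ht : Tendsto (fun n : ℕ => ‖qPoch q x n‖) atTop (𝓝 ‖qPochInf q x‖) :=
    (tendsto_qPoch x hq).norm
  have hev : ∀ᶠ n in atTop, ‖qPochInf q x‖ / 2 ≤ ‖qPoch q x n‖ :=
    ht.eventually_const_le (by linarith)
  obtain ⟨N, hN⟩ := eventually_atTop.1 hev
  set s : Finset ℝ := insert (‖qPochInf q x‖ / 2)
    ((Finset.range N).image fun n => ‖qPoch q x n‖) with hs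
  have hsne : s.Nonempty := ⟨_, Finset.mem_insert_self _ _⟩
  refine ⟨s.min' hsne, ?_, ?_⟩
  · rcases Finset.mem_insert.1 (s.min'_mem hsne) with h | h
    · rw [h]; linarith
    · obtain ⟨n, -, hn⟩ := Finset.mem_image.1 h
      rw [← hn]; exact norm_pos_iff.2 (qPoch_ne_zero hx n)
  · intro n
    rcases lt_or_ge n N with h | h
    · exact Finset.min'_le _ _ (Finset.mem_insert_of_mem
        (Finset.mem_image.2 ⟨n, Finset.mem_range.2 h, rfl⟩))
    · exact le_trans (Finset.min'_le _ _ (Finset.mem_insert_self _ _)) (hN n h)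

lemma summable_T {q a b c : ℂ} (hq : ‖q‖ < 1)
    (hc : ∀ j : ℕ, c * q ^ j ≠ 1) (ha' : ∀ j : ℕ, a * q ^ j ≠ 1) (k : ℕ) :
    Summable (fun n : ℕ =>
      qPoch q (a * q ^ (k + 1)) n * qPoch q (c / b) n * q ^ n /
        (qPoch q a (n + 1) * qPoch q (c * q ^ (k + 1)) n)) := by
  have hck : ∀ j : ℕ, (c * q ^ (k+1)) * q ^ j ≠ 1 := by
    intro j h; exact hc (k+1+j) (by rw [pow_add, ← mul_assoc]; exact h)
  obtain ⟨δ₁, hδ₁, hb₁⟩ := qPoch_norm_lower hq ha'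
  obtain ⟨δ₂, hδ₂, hb₂⟩ := qPoch_norm_lower hq hck
  set E₁ := Real.exp (‖a * q ^ (k+1)‖ * (1 - ‖q‖)⁻¹)
  set E₂ := Real.exp (‖c / b‖ * (1 - ‖q‖)⁻¹)
  refine Summable.of_norm_bounded (g := fun n => (E₁ * E₂ / (δ₁ * δ₂)) * ‖q‖ ^ n)
    (((summable_geometric_of_lt_one (norm_nonneg q) hq).mul_left _)) fun n => ?_
  have hE₁ : (0:ℝ) < E₁ := Real.exp_pos _
  have hE₂ : (0:ℝ) < E₂ := Real.exp_pos _
  rw [norm_div, norm_mul, norm_mul, norm_pow, norm_mul]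
  have key : ‖qPoch q (a * q ^ (k+1)) n‖ * ‖qPoch q (c / b) n‖ * ‖q‖ ^ n /
      (‖qPoch q a (n+1)‖ * ‖qPoch q (c * q ^ (k+1)) n‖) ≤
      E₁ * E₂ * ‖q‖ ^ n / (δ₁ * δ₂) := by
    refine div_le_div₀ (by positivity) ?_ (mul_pos hδ₁ hδ₂) ?_
    · have h1 := qPoch_norm_le (a * q ^ (k+1)) hq n
      have h2 := qPoch_norm_le (c / b) hq n
      have : ‖qPoch q (a * q ^ (k+1)) n‖ * ‖qPoch q (c / b) n‖ ≤ E₁ * E₂ :=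
        mul_le_mul h1 h2 (norm_nonneg _) hE₁.le
      exact mul_le_mul_of_nonneg_right this (by positivity)
    · exact mul_le_mul (hb₁ (n+1)) (hb₂ n) hδ₂.le (norm_nonneg _)
  calc _ ≤ E₁ * E₂ * ‖q‖ ^ n / (δ₁ * δ₂) := key
    _ = E₁ * E₂ / (δ₁ * δ₂) * ‖q‖ ^ n := by ring

noncomputable def Fwz (q a b c : ℂ) (n j : ℕ) : ℂ :=
  qPoch q (c/b) n * qPoch q (a * q ^ n) j * qPoch q b j * (c/(a*b)) ^ j /
    (qPoch q c n * qPoch q q j * qPoch q (c * q ^ n) j)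

noncomputable def Gwz (q a b c : ℂ) (n : ℕ) : ℕ → ℂ
  | 0 => 0
  | (j+1) => -(qPoch q (a * q ^ (n+1)) j * qPoch q b (j+1) * c ^ (j+1) * q ^ n *
        qPoch q (c/b) n) /
      (qPoch q q j * a ^ j * b ^ (j+1) * qPoch q c n * qPoch q (c * q ^ n) (j+1))

lemma wz_pair {q a b c : ℂ} (hq : ‖q‖ < 1) (ha : a ≠ 0) (hb : b ≠ 0)
    (hc : ∀ j : ℕ, c * q ^ j ≠ 1) (n j : ℕ) :
    Fwz q a b c (n+1) j - Fwz q a b c n j = Gwz q a b c n (j+1) - Gwz q a b c n j := by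
  have hcn : ∀ m i : ℕ, 1 - c * q ^ m * q ^ i ≠ 0 := one_sub_ne hc
  have hC : qPoch q c n ≠ 0 := qPoch_ne_zero hc n
  have hcq0 : (1 : ℂ) - c * q ^ n ≠ 0 := by
    have := hcn n 0; rwa [pow_zero, mul_one] at this
  have hqq : ∀ m : ℕ, qPoch q q m ≠ 0 := qPoch_ne_zero (q_self_ne hq)
  cases j with
  | zero =>
    simp only [Fwz, Gwz, qPoch_zero, qPoch_one, zero_add, pow_zero]
    rw [qPoch_succ q (c/b) n, qPoch_succ q c n]
    field_simp
    ring
  | succ j =>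
    have hY : qPoch q (c * q ^ (n+1)) j ≠ 0 := by
      refine qPoch_ne_zero ?_ j
      intro i h; exact hcn (n+1) i (by rw [sub_eq_zero, h])
    have hcq1 : (1 : ℂ) - c * q ^ (n+1) * q ^ j ≠ 0 := hcn (n+1) j
    have h1q : (1 : ℂ) - q * q ^ j ≠ 0 := sub_ne_zero.2 (Ne.symm (q_self_ne hq j))
    have hQ : qPoch q q j ≠ 0 := hqq j
    simp only [Fwz, Gwz]
    rw [qPoch_shift_succ q c n (j+1), qPoch_shift_succ q c n j,
      qPoch_succ q (c * q ^ (n+1)) j,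
      qPoch_shift_succ q a n j, qPoch_succ q (a * q ^ (n+1)) j,
      qPoch_succ q (c/b) n, qPoch_succ q c n,
      qPoch_succ q b (j+1), qPoch_succ q b j,
      qPoch_succ q q j]
    have hD1 : qPoch q c n * (1 - c * q ^ n) * (qPoch q q j * (1 - q * q ^ j)) *
        (qPoch q (c * q ^ (n + 1)) j * (1 - c * q ^ (n + 1) * q ^ j)) ≠ 0 := by
      apply_rules [mul_ne_zero]
    have hD2 : qPoch q c n * (qPoch q q j * (1 - q * q ^ j)) *
        ((1 - c * q ^ n) * qPoch q (c * q ^ (n + 1)) j) ≠ 0 := by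
      apply_rules [mul_ne_zero]
    have hD3 : qPoch q q j * (1 - q * q ^ j) * a ^ (j + 1) * b ^ (j + 1 + 1) * qPoch q c n *
        ((1 - c * q ^ n) * (qPoch q (c * q ^ (n + 1)) j * (1 - c * q ^ (n + 1) * q ^ j))) ≠ 0 := by
      apply_rules [mul_ne_zero, pow_ne_zero]
    have hD4 : qPoch q q j * a ^ j * b ^ (j + 1) * qPoch q c n *
        ((1 - c * q ^ n) * qPoch q (c * q ^ (n + 1)) j) ≠ 0 := by
      apply_rules [mul_ne_zero, pow_ne_zero]
    rw [div_sub_div _ _ hD1 hD2, div_sub_div _ _ hD3 hD4,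
      div_eq_div_iff (mul_ne_zero hD1 hD2) (mul_ne_zero hD3 hD4)]
    rw [div_pow, mul_pow]; field_simp
    ring

lemma Gwz_eq {q a b c : ℂ} (hq : ‖q‖ < 1) (ha : a ≠ 0) (hb : b ≠ 0)
    (hc : ∀ j : ℕ, c * q ^ j ≠ 1) (ha' : ∀ j : ℕ, a * q ^ j ≠ 1) (k n : ℕ) :
    Gwz q a b c n (k+1) =
      -((qPoch q a (k + 1) * qPoch q b (k + 1) * c ^ (k + 1) /
          (qPoch q q k * qPoch q c (k + 1) * a ^ k * b ^ (k + 1))) *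
        (qPoch q (a * q ^ (k + 1)) n * qPoch q (c / b) n * q ^ n /
          (qPoch q a (n + 1) * qPoch q (c * q ^ (k + 1)) n))) := by
  have hA1 : qPoch q a (k+1) * qPoch q (a * q ^ (k+1)) n
      = qPoch q a (n+1) * qPoch q (a * q ^ (n+1)) k := by
    rw [← qPoch_add, ← qPoch_add]; congr 1; omega
  have hC1 : qPoch q c (k+1) * qPoch q (c * q ^ (k+1)) n
      = qPoch q c n * qPoch q (c * q ^ n) (k+1) := by
    rw [← qPoch_add, ← qPoch_add]; congr 1; omega
  have hak : qPoch q a (k+1) ≠ 0 := qPoch_ne_zero ha' _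
  have han : qPoch q a (n+1) ≠ 0 := qPoch_ne_zero ha' _
  have hck : qPoch q c (k+1) ≠ 0 := qPoch_ne_zero hc _
  have hcn : qPoch q c n ≠ 0 := qPoch_ne_zero hc _
  have hcnk : qPoch q (c * q ^ n) (k+1) ≠ 0 := by
    refine qPoch_ne_zero (fun i h => ?_) _
    exact hc (n + i) (by rw [pow_add, ← mul_assoc]; exact h)
  have hckn : qPoch q (c * q ^ (k+1)) n ≠ 0 := by
    refine qPoch_ne_zero (fun i h => ?_) _
    exact hc (k + 1 + i) (by rw [pow_add, ← mul_assoc]; exact h)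
  have hqk : qPoch q q k ≠ 0 := qPoch_ne_zero (q_self_ne hq) _
  have key : (qPoch q a (k + 1) * qPoch q b (k + 1) * c ^ (k + 1) /
          (qPoch q q k * qPoch q c (k + 1) * a ^ k * b ^ (k + 1))) *
        (qPoch q (a * q ^ (k + 1)) n * qPoch q (c / b) n * q ^ n /
          (qPoch q a (n + 1) * qPoch q (c * q ^ (k + 1)) n)) =
      (qPoch q (a * q ^ (n+1)) k * qPoch q b (k+1) * c ^ (k+1) * qPoch q (c/b) n * q ^ n) /
        (qPoch q q k * a ^ k * b ^ (k+1) * qPoch q c n * qPoch q (c * q ^ n) (k+1)) := by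
    rw [div_mul_div_comm, div_eq_div_iff (by apply_rules [mul_ne_zero, pow_ne_zero])
      (by apply_rules [mul_ne_zero, pow_ne_zero])]
    linear_combination (qPoch q q k * a ^ k * b ^ (k+1) * qPoch q b (k+1) * c ^ (k+1) *
        qPoch q (c/b) n * q ^ n) * (qPoch q c n * qPoch q (c * q ^ n) (k+1) * hA1 -
        qPoch q a (n+1) * qPoch q (a * q ^ (n+1)) k * hC1)
  rw [key, Gwz]
  ring

lemma tendsto_qPoch_shift {q x : ℂ} (hq : ‖q‖ < 1) (j : ℕ) :
    Tendsto (fun N : ℕ => qPoch q (x * q ^ N) j) atTop (𝓝 1) := by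
  have h1 : Tendsto (fun N : ℕ => q ^ N) atTop (𝓝 0) :=
    tendsto_pow_atTop_nhds_zero_of_norm_lt_one hq
  have : Tendsto (fun N : ℕ => ∏ i ∈ Finset.range j, (1 - x * q ^ N * q ^ i)) atTop
      (𝓝 (∏ i ∈ Finset.range j, (1 : ℂ))) := by
    refine tendsto_finset_prod _ fun i _ => ?_
    have : Tendsto (fun N : ℕ => 1 - x * q ^ N * q ^ i) atTop (𝓝 (1 - x * 0 * q ^ i)) :=
      (((h1.const_mul x).mul_const (q ^ i)).const_sub 1)
    simpa using this
  simpa [qPoch] using this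

/-- The companion identity of the q-Gauss sum (Example 3.1, following (3.12)). -/
theorem q_gauss_companion (q a b c : ℂ) (hq : ‖q‖ < 1) (ha : a ≠ 0)
    (hb : b ≠ 0) (hz : ‖c / (a * b)‖ < 1)
    (hc : ∀ j : ℕ, c * q ^ j ≠ 1) (ha' : ∀ j : ℕ, a * q ^ j ≠ 1) (k : ℕ) :
    Summable (fun n : ℕ =>
      qPoch q (a * q ^ (k + 1)) n * qPoch q (c / b) n * q ^ n /
        (qPoch q a (n + 1) * qPoch q (c * q ^ (k + 1)) n)) ∧
    ∑ j ∈ Finset.range (k + 1),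
        qPoch q a j * qPoch q b j * (c / (a * b)) ^ j / (qPoch q q j * qPoch q c j) =
      (qPochInf q (c / b) / qPochInf q c) *
        ∑ j ∈ Finset.range (k + 1), qPoch q b j * (c / (a * b)) ^ j / qPoch q q j
      + (qPoch q a (k + 1) * qPoch q b (k + 1) * c ^ (k + 1) /
          (qPoch q q k * qPoch q c (k + 1) * a ^ k * b ^ (k + 1))) *
        ∑' n : ℕ, qPoch q (a * q ^ (k + 1)) n * qPoch q (c / b) n * q ^ n /
          (qPoch q a (n + 1) * qPoch q (c * q ^ (k + 1)) n) := by
  have hq' : ‖q‖ < 1 := hq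
  have hT : Summable (fun n : ℕ =>
      qPoch q (a * q ^ (k + 1)) n * qPoch q (c / b) n * q ^ n /
        (qPoch q a (n + 1) * qPoch q (c * q ^ (k + 1)) n)) := summable_T hq' hc ha' k
  refine ⟨hT, ?_⟩
  set T : ℕ → ℂ := fun n => qPoch q (a * q ^ (k + 1)) n * qPoch q (c / b) n * q ^ n /
      (qPoch q a (n + 1) * qPoch q (c * q ^ (k + 1)) n) with hTdef
  set Ck : ℂ := qPoch q a (k + 1) * qPoch q b (k + 1) * c ^ (k + 1) /
      (qPoch q q k * qPoch q c (k + 1) * a ^ k * b ^ (k + 1)) with hCkdef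
  set A : ℂ := qPochInf q (c / b) / qPochInf q c with hAdef
  set P : ℕ → ℂ := fun N => ∑ j ∈ Finset.range (k + 1), Fwz q a b c N j with hPdef
  -- column relation
  have hcol : ∀ n : ℕ, P (n + 1) - P n = Gwz q a b c n (k + 1) := by
    intro n
    have : P (n + 1) - P n
        = ∑ j ∈ Finset.range (k + 1), (Fwz q a b c (n+1) j - Fwz q a b c n j) := by
      rw [hPdef, ← Finset.sum_sub_distrib]
    rw [this]
    calc ∑ j ∈ Finset.range (k + 1), (Fwz q a b c (n+1) j - Fwz q a b c n j)
        = ∑ j ∈ Finset.range (k + 1), (Gwz q a b c n (j+1) - Gwz q a b c n j) :=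
          Finset.sum_congr rfl fun j _ => wz_pair hq' ha hb hc n j
      _ = Gwz q a b c n (k + 1) - Gwz q a b c n 0 :=
          Finset.sum_range_sub (fun j => Gwz q a b c n j) (k + 1)
      _ = Gwz q a b c n (k + 1) := by rw [show Gwz q a b c n 0 = 0 from rfl, sub_zero]
  have hpartial : ∀ N : ℕ, ∑ n ∈ Finset.range N, Gwz q a b c n (k + 1) = P N - P 0 := by
    intro N
    calc ∑ n ∈ Finset.range N, Gwz q a b c n (k + 1)
        = ∑ n ∈ Finset.range N, (P (n+1) - P n) :=
          Finset.sum_congr rfl fun n _ => (hcol n).symm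
      _ = P N - P 0 := Finset.sum_range_sub P N
  -- summability of the G column and its sum
  have hGeq : ∀ n : ℕ, Gwz q a b c n (k + 1) = -Ck * T n := by
    intro n
    rw [Gwz_eq hq' ha hb hc ha' k n, neg_mul]
  have hGsum : Summable (fun n => Gwz q a b c n (k + 1)) :=
    (hT.mul_left (-Ck)).congr fun n => (hGeq n).symm
  have hGtsum : ∑' n, Gwz q a b c n (k + 1) = -Ck * (∑' n, T n) := by
    rw [tsum_congr hGeq, tsum_mul_left]
  have hlim1 : Tendsto (fun N => ∑ n ∈ Finset.range N, Gwz q a b c n (k + 1)) atTop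
      (𝓝 (-Ck * (∑' n, T n))) := by
    rw [← hGtsum]; exact hGsum.hasSum.tendsto_sum_nat
  -- limit of P
  have hcInf : qPochInf q c ≠ 0 := qPochInf_ne_zero hq' hc
  have hlim2 : Tendsto P atTop
      (𝓝 (∑ j ∈ Finset.range (k + 1), A * (qPoch q b j * (c/(a*b)) ^ j / qPoch q q j))) := by
    refine tendsto_finset_sum _ fun j _ => ?_
    have hQj : qPoch q q j ≠ 0 := qPoch_ne_zero (q_self_ne hq') j
    have t1 : Tendsto (fun N : ℕ => qPoch q (c/b) N) atTop (𝓝 (qPochInf q (c/b))) :=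
      tendsto_qPoch _ hq'
    have t2 : Tendsto (fun N : ℕ => qPoch q c N) atTop (𝓝 (qPochInf q c)) :=
      tendsto_qPoch _ hq'
    have t3 : Tendsto (fun N : ℕ => qPoch q (a * q ^ N) j) atTop (𝓝 1) :=
      tendsto_qPoch_shift hq' j
    have t4 : Tendsto (fun N : ℕ => qPoch q (c * q ^ N) j) atTop (𝓝 1) :=
      tendsto_qPoch_shift hq' j
    have hden : qPochInf q c * qPoch q q j * 1 ≠ 0 := by
      rw [mul_one]; exact mul_ne_zero hcInf hQj
    have t5 : Tendsto (fun N : ℕ => Fwz q a b c N j) atTop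
        (𝓝 (qPochInf q (c/b) * 1 * qPoch q b j * (c/(a*b)) ^ j /
          (qPochInf q c * qPoch q q j * 1))) := by
      simp only [Fwz]
      exact (((t1.mul t3).mul_const (qPoch q b j)).mul_const ((c/(a*b)) ^ j)).div
        ((t2.mul_const (qPoch q q j)).mul t4) hden
    have : qPochInf q (c/b) * 1 * qPoch q b j * (c/(a*b)) ^ j /
        (qPochInf q c * qPoch q q j * 1) = A * (qPoch q b j * (c/(a*b)) ^ j / qPoch q q j) := by
      rw [hAdef]; ring
    rwa [this] at t5
  -- identify P 0
  have hP0 : P 0 = ∑ j ∈ Finset.range (k + 1),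
      qPoch q a j * qPoch q b j * (c / (a * b)) ^ j / (qPoch q q j * qPoch q c j) := by
    refine Finset.sum_congr rfl fun j _ => ?_
    simp [Fwz, qPoch_zero, pow_zero, mul_one]
  -- combine limits
  have hlim2' : Tendsto (fun N => P N - P 0) atTop
      (𝓝 ((∑ j ∈ Finset.range (k + 1), A * (qPoch q b j * (c/(a*b)) ^ j / qPoch q q j))
        - P 0)) := hlim2.sub_const (P 0)
  have hlim1' : Tendsto (fun N => P N - P 0) atTop (𝓝 (-Ck * (∑' n, T n))) := by
    refine hlim1.congr fun N => hpartial N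
  have huniq : (∑ j ∈ Finset.range (k + 1), A * (qPoch q b j * (c/(a*b)) ^ j / qPoch q q j))
      - P 0 = -Ck * (∑' n, T n) := tendsto_nhds_unique hlim2' hlim1'
  rw [hP0] at huniq
  rw [← Finset.mul_sum] at huniq
  linear_combination -huniq
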